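/- Let k be a field, n a natural number, S a finitely generated submonoid of ℤⁿ, u* ∈ S, and let T be the submonoid of ℤⁿ generated by S together with −u*. Let λ : k[S] → k[T] be the ring homomorphism of monoid algebras induced by the inclusion S ⊆ T. Then for every u₀ ∈ T: (a) λ⁻¹(⟨χ^{u₀}⟩) = ⟨χ^v : v ∈ S and v − u₀ ∈ T⟩, so in particular λ⁻¹(⟨χ^{u₀}⟩) is a monomial ideal of k[S]; and (b) for u ∈ S, the monomial χ^u lies in λ⁻¹(⟨χ^{u₀}⟩) if and only if u − u₀ ∈ T. -/

import Mathlib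

noncomputable section

theorem key_mem (k : Type) [Field k] (n : ℕ)
    (S T : AddSubmonoid (Fin n → ℤ)) (hle : S ≤ T)
    (lam : AddMonoidAlgebra k S →+* AddMonoidAlgebra k T)
    (hlam : lam = AddMonoidAlgebra.mapDomainRingHom k (AddSubmonoid.inclusion hle))
    (u₀ : Fin n → ℤ) (hu₀ : u₀ ∈ T) (g : AddMonoidAlgebra k S) :
    g ∈ Ideal.comap lam (Ideal.span {AddMonoidAlgebra.single (⟨u₀, hu₀⟩ : T) (1 : k)})
      ↔ ∀ w ∈ g.coeff.support, ((w : Fin n → ℤ) - u₀ ∈ T) := by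
  classical
  have hinj : Function.Injective (AddSubmonoid.inclusion hle) := by
    intro a b hab
    have h2 := congrArg (fun x : T => (x : Fin n → ℤ)) hab
    exact Subtype.ext h2
  have himg : ({AddMonoidAlgebra.single (⟨u₀, hu₀⟩ : T) (1 : k)} : Set (AddMonoidAlgebra k T))
      = AddMonoidAlgebra.of' k T '' {(⟨u₀, hu₀⟩ : T)} := by
    simp [AddMonoidAlgebra.of'_apply]
  rw [Ideal.mem_comap, himg, AddMonoidAlgebra.mem_ideal_span_of'_image, hlam]
  have hsupp : (AddMonoidAlgebra.mapDomainRingHom k (AddSubmonoid.inclusion hle) g).coeff.support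
      = g.coeff.support.image (AddSubmonoid.inclusion hle) := by
    exact Finsupp.mapDomain_support_of_injective hinj g.coeff
  rw [hsupp]
  constructor
  · intro h w hw
    obtain ⟨m', hm', d, hd⟩ := h _ (Finset.mem_image_of_mem _ hw)
    rw [Set.mem_singleton_iff] at hm'
    subst hm'
    have : (w : Fin n → ℤ) = (d : Fin n → ℤ) + u₀ := congrArg Subtype.val hd
    have : (w : Fin n → ℤ) - u₀ = (d : Fin n → ℤ) := by rw [this]; ring
    rw [this]; exact d.2
  · intro h m hm
    rw [Finset.mem_image] at hm
    obtain ⟨w, hw, rfl⟩ := hm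
    refine ⟨_, Set.mem_singleton _, ⟨(w : Fin n → ℤ) - u₀, h w hw⟩, ?_⟩
    apply Subtype.ext
    show (w : Fin n → ℤ) = ((w : Fin n → ℤ) - u₀) + u₀
    ring

/-- Proposition 4.8 (Prop. `prop:hface`): let `S` be a finitely generated submonoid of
`ℤⁿ`, `u* ∈ S`, and `T` the submonoid generated by `S` and `−u*` (this encodes the
localization homomorphism `λ : A_σ → A_τ` to a face `τ ≺ σ`, via
`S_τ = S_σ + ℤ·u*`). Then for every `u₀ ∈ T`:
(a) `λ⁻¹(⟨χ^{u₀}⟩) = ⟨χ^v : v ∈ S, v − u₀ ∈ T⟩`, a monomial ideal; and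
(b) for `u ∈ S`, `χ^u ∈ λ⁻¹(⟨χ^{u₀}⟩)` if and only if `u − u₀ ∈ T`. -/
theorem comap_span_single_eq (k : Type) [Field k] (n : ℕ)
    (S T : AddSubmonoid (Fin n → ℤ)) (hfg : S.FG)
    (ustar : Fin n → ℤ) (hustar : ustar ∈ S)
    (hT : T = S ⊔ AddSubmonoid.closure {-ustar}) (hle : S ≤ T)
    (lam : AddMonoidAlgebra k S →+* AddMonoidAlgebra k T)
    (hlam : lam = AddMonoidAlgebra.mapDomainRingHom k (AddSubmonoid.inclusion hle))
    (u₀ : Fin n → ℤ) (hu₀ : u₀ ∈ T) :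
    Ideal.comap lam (Ideal.span {AddMonoidAlgebra.single (⟨u₀, hu₀⟩ : T) (1 : k)})
        = Ideal.span {f : AddMonoidAlgebra k S |
            ∃ (v : Fin n → ℤ) (hv : v ∈ S), v - u₀ ∈ T ∧
              f = AddMonoidAlgebra.single (⟨v, hv⟩ : S) (1 : k)} ∧
    ∀ (u : Fin n → ℤ) (hu : u ∈ S),
      (AddMonoidAlgebra.single (⟨u, hu⟩ : S) (1 : k) ∈
          Ideal.comap lam (Ideal.span {AddMonoidAlgebra.single (⟨u₀, hu₀⟩ : T) (1 : k)})
        ↔ u - u₀ ∈ T) := by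
  classical
  have hset : {f : AddMonoidAlgebra k S |
        ∃ (v : Fin n → ℤ) (hv : v ∈ S), v - u₀ ∈ T ∧
          f = AddMonoidAlgebra.single (⟨v, hv⟩ : S) (1 : k)}
      = AddMonoidAlgebra.of' k S '' {w : S | (w : Fin n → ℤ) - u₀ ∈ T} := by
    ext f
    constructor
    · rintro ⟨v, hv, hvT, rfl⟩
      exact ⟨⟨v, hv⟩, hvT, rfl⟩
    · rintro ⟨⟨v, hv⟩, hvT, rfl⟩
      exact ⟨v, hv, hvT, rfl⟩
  constructor
  · ext g
    rw [key_mem k n S T hle lam hlam u₀ hu₀ g, hset,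
      AddMonoidAlgebra.mem_ideal_span_of'_image]
    constructor
    · intro h m hm
      exact ⟨m, h m hm, 0, (zero_add m).symm⟩
    · intro h w hw
      obtain ⟨m', hm', d, rfl⟩ := h w hw
      show ((d : Fin n → ℤ) + (m' : Fin n → ℤ)) - u₀ ∈ T
      have : ((d : Fin n → ℤ) + (m' : Fin n → ℤ)) - u₀
          = (d : Fin n → ℤ) + ((m' : Fin n → ℤ) - u₀) := by ring
      rw [this]
      exact T.add_mem (hle d.2) hm'
  · intro u hu
    rw [key_mem k n S T hle lam hlam u₀ hu₀]
    have hsupp : (AddMonoidAlgebra.single (⟨u, hu⟩ : S) (1 : k)).coeff.support = {(⟨u, hu⟩ : S)} :=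
      Finsupp.support_single_ne_zero _ one_ne_zero
    rw [hsupp]
    simp

end
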